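/- Let I be a nonempty finite set, μ > 0, φ* : I → ℝ, M ∈ ℝ with M ≥ max_{x∈I} |φ*(x)|, and α > M. Suppose η, φ : I → ℝ satisfy max_{x∈I} |η(x)| + max_{x∈I} |φ(x) − φ*(x)| ≤ min{1, μ} · (α − M). Then |η(x) + μ·φ(x)| ≤ α·μ for every x ∈ I, and consequently, for every x ∈ I, the function z ↦ α·μ·|z| + (1/2)·( z − (η(x) + μ·φ(x)) )² on ℝ attains its minimum uniquely at z = 0; i.e., the proximal map of α·μ·|·| sends η(x) + μ·φ(x) to 0. -/
import Mathlib


open Filter Topology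

/-- key estimate for the reduction of UOT iterates to OT
iterates.  If `M ≥ max_x |φ*(x)|`, `α > M` and
`max_x |η(x)| + max_x |φ(x) − φ*(x)| ≤ min{1, μ}·(α − M)`, then
`|η(x) + μ·φ(x)| ≤ α·μ` for every `x`, and consequently for every `x` the function
`z ↦ α·μ·|z| + (1/2)·(z − (η(x) + μ·φ(x)))²` attains its minimum uniquely at
`z = 0` (i.e. the proximal map of `α·μ·|·|` sends `η(x) + μ·φ(x)` to `0`). -/
theorem prox_to_zero {I : Type*} [Fintype I] [Nonempty I]
    (μ : ℝ) (hμ : 0 < μ) (φstar : I → ℝ) (M : ℝ)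
    (hM : Finset.univ.sup' Finset.univ_nonempty (fun x => |φstar x|) ≤ M)
    (α : ℝ) (hα : M < α)
    (η φ : I → ℝ)
    (hbound : Finset.univ.sup' Finset.univ_nonempty (fun x => |η x|) +
        Finset.univ.sup' Finset.univ_nonempty (fun x => |φ x - φstar x|) ≤
      min 1 μ * (α - M)) :
    (∀ x : I, |η x + μ * φ x| ≤ α * μ) ∧
    (∀ x : I, ∀ z : ℝ, z ≠ 0 →
      α * μ * |(0 : ℝ)| + (1 / 2) * ((0 : ℝ) - (η x + μ * φ x)) ^ 2
        < α * μ * |z| + (1 / 2) * (z - (η x + μ * φ x)) ^ 2) := by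
  have key : ∀ x : I, |η x + μ * φ x| ≤ α * μ := by
    intro x
    have h1 : |η x| ≤ Finset.univ.sup' Finset.univ_nonempty (fun x => |η x|) :=
      Finset.le_sup' (fun x => |η x|) (Finset.mem_univ x)
    have h2 : |φ x - φstar x| ≤
        Finset.univ.sup' Finset.univ_nonempty (fun x => |φ x - φstar x|) :=
      Finset.le_sup' (fun x => |φ x - φstar x|) (Finset.mem_univ x)
    have h3 : |φstar x| ≤ M :=
      le_trans (Finset.le_sup' (fun x => |φstar x|) (Finset.mem_univ x)) hM
    have h4 : |φ x| ≤ |φ x - φstar x| + |φstar x| := by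
      calc |φ x| = |(φ x - φstar x) + φstar x| := by ring_nf
        _ ≤ |φ x - φstar x| + |φstar x| := abs_add_le _ _
    have h5 : |η x + μ * φ x| ≤ |η x| + μ * |φ x| := by
      have := abs_add_le (η x) (μ * φ x)
      rw [abs_mul, abs_of_pos hμ] at this
      exact this
    rcases le_total 1 μ with h | h
    · rw [min_eq_left h] at hbound
      nlinarith [abs_nonneg (η x), abs_nonneg (φ x - φstar x)]
    · rw [min_eq_right h] at hbound
      nlinarith [abs_nonneg (η x), abs_nonneg (φ x - φstar x)]
  refine ⟨key, fun x z hz => ?_⟩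
  have hA := key x
  set a := η x + μ * φ x with ha
  clear_value a
  have hza : z * a ≤ |z| * (α * μ) := by
    calc z * a ≤ |z * a| := le_abs_self _
      _ = |z| * |a| := abs_mul _ _
      _ ≤ |z| * (α * μ) := mul_le_mul_of_nonneg_left hA (abs_nonneg z)
  have hz2 : 0 < z ^ 2 := by positivity
  simp only [abs_zero]
  nlinarith [hz2, hza]
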